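/- Let ρ and σ be positive definite d×d density matrices, let λ_ρ be the largest eigenvalue of ρ, and let α = min{α_ρ, α_σ} where α_ρ and α_σ are the smallest eigenvalues of ρ and σ respectively. Then the Umegaki relative entropy satisfies S(ρ‖σ) ≤ ‖ρ−σ‖₁ · λ_ρ / α. -/

import Mathlib

open Matrix ComplexOrder

/-- The trace norm of a complex matrix: the sum of its singular values,
realized as `Tr √(Aᴴ A)`. -/
noncomputable def traceNorm {d : ℕ} (A : Matrix (Fin d) (Fin d) ℂ) : ℝ :=
  (((Matrix.posSemidef_conjTranspose_mul_self A).1.eigenvectorUnitary.1 *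
    diagonal (((↑) : ℝ → ℂ) ∘ (√·) ∘ (Matrix.posSemidef_conjTranspose_mul_self A).1.eigenvalues) *
    (star (Matrix.posSemidef_conjTranspose_mul_self A).1.eigenvectorUnitary :
      Matrix (Fin d) (Fin d) ℂ)).trace).re

/-- Functional calculus for a Hermitian matrix: apply `f` to the eigenvalues in an
orthonormal eigenbasis. -/
noncomputable def matFun {d : ℕ} {A : Matrix (Fin d) (Fin d) ℂ} (hA : A.IsHermitian)
    (f : ℝ → ℝ) : Matrix (Fin d) (Fin d) ℂ :=
  (hA.eigenvectorUnitary : Matrix (Fin d) (Fin d) ℂ) *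
    Matrix.diagonal (fun i => (f (hA.eigenvalues i) : ℂ)) *
    (star hA.eigenvectorUnitary : Matrix (Fin d) (Fin d) ℂ)

/-- `f : (0,∞) → ℝ` is operator monotone decreasing: for all positive definite matrices
`A ≤ B` (Loewner order) of any size, `f(B) ≤ f(A)`. -/
def OpMonoDecrOn (f : ℝ → ℝ) : Prop :=
  ∀ (n : ℕ) (A B : Matrix (Fin n) (Fin n) ℂ) (hA : A.PosDef) (hB : B.PosDef),
    (B - A).PosSemidef → (matFun hA.1 f - matFun hB.1 f).PosSemidef

/-- The quasi-relative entropy `S_f(ρ‖σ) = Σ_{j,k} λ_j f(μ_k/λ_j) |⟨φ_k|ψ_j⟩|²` computed from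
spectral decompositions `ρ = Σ_j λ_j |ψ_j⟩⟨ψ_j|`, `σ = Σ_k μ_k |φ_k⟩⟨φ_k|`. -/
noncomputable def quasiRelEntropy {d : ℕ} (f : ℝ → ℝ) {ρ σ : Matrix (Fin d) (Fin d) ℂ}
    (hρ : ρ.IsHermitian) (hσ : σ.IsHermitian) : ℝ :=
  ∑ j, ∑ k, hρ.eigenvalues j * f (hσ.eigenvalues k / hρ.eigenvalues j) *
    ‖(inner ℂ (hσ.eigenvectorBasis k) (hρ.eigenvectorBasis j) : ℂ)‖ ^ 2

/-- The Umegaki relative entropy `S(ρ‖σ) = Tr(ρ (log ρ − log σ))`. -/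
noncomputable def relEntropy {d : ℕ} {ρ σ : Matrix (Fin d) (Fin d) ℂ}
    (hρ : ρ.IsHermitian) (hσ : σ.IsHermitian) : ℝ :=
  ((ρ * (matFun hρ Real.log - matFun hσ Real.log)).trace).re

/-- The Tsallis relative q-entropy `S_q(ρ‖σ) = (1/(1−q))(1 − Tr(ρ^q σ^{1−q}))`. -/
noncomputable def tsallisEntropy {d : ℕ} (q : ℝ) {ρ σ : Matrix (Fin d) (Fin d) ℂ}
    (hρ : ρ.IsHermitian) (hσ : σ.IsHermitian) : ℝ :=
  (1 / (1 - q)) *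
    (1 - ((matFun hρ (fun x => x ^ q) * matFun hσ (fun x => x ^ (1 - q))).trace).re)


open MeasureTheory Set Filter

section Aux
variable {d : ℕ}


-- derivative helpers
lemma hd_log (x : ℝ) (hx : 0 < x) {t : ℝ} (ht : 0 ≤ t) :
    HasDerivAt (fun s => Real.log (s + x)) (t + x)⁻¹ t := by
  have h : HasDerivAt (fun s : ℝ => s + x) 1 t := (hasDerivAt_id t).add_const x
  have := h.log (by positivity)
  simpa using this

lemma hd_neg_inv (x : ℝ) (hx : 0 < x) {t : ℝ} (ht : 0 ≤ t) :
    HasDerivAt (fun s => -(s + x)⁻¹) (((t + x) ^ 2)⁻¹) t := by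
  have h : HasDerivAt (fun s : ℝ => s + x) 1 t := (hasDerivAt_id t).add_const x
  have h2 : HasDerivAt (fun s => -(s + x)⁻¹) (-(-1 / (t + x) ^ 2)) t :=
    (h.inv (by positivity)).neg
  convert h2 using 1
  ring

lemma integral_inv_sq_Ioi (x : ℝ) (hx : 0 < x) :
    IntegrableOn (fun t : ℝ => ((t + x) ^ 2)⁻¹) (Ioi 0) ∧
      ∫ t in Ioi (0:ℝ), ((t + x) ^ 2)⁻¹ = x⁻¹ := by
  have hderiv : ∀ t ∈ Ici (0:ℝ), HasDerivAt (fun s => -(s + x)⁻¹) (((t + x) ^ 2)⁻¹) t :=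
    fun t ht => hd_neg_inv x hx ht
  have hpos : ∀ t ∈ Ioi (0:ℝ), 0 ≤ ((t + x) ^ 2)⁻¹ := by
    intro t ht; positivity
  have htend : Tendsto (fun s : ℝ => -(s + x)⁻¹) atTop (nhds 0) := by
    have h1 : Tendsto (fun s : ℝ => s + x) atTop atTop :=
      tendsto_atTop_add_const_right _ x tendsto_id
    have := (tendsto_inv_atTop_zero.comp h1).neg
    simpa using this
  refine ⟨integrableOn_Ioi_deriv_of_nonneg' hderiv hpos htend, ?_⟩
  rw [integral_Ioi_of_hasDerivAt_of_nonneg' hderiv hpos htend]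
  simp

lemma tendsto_ratio (x y : ℝ) (hx : 0 < x) (hy : 0 < y) :
    Tendsto (fun t : ℝ => Real.log (t + x) - Real.log (t + y)) atTop (nhds 0) := by
  have h1 : Tendsto (fun t : ℝ => (t + x) / (t + y)) atTop (nhds 1) := by
    have h2 : Tendsto (fun t : ℝ => 1 + (x - y) * (t + y)⁻¹) atTop (nhds (1 + (x - y) * 0)) := by
      exact tendsto_const_nhds.add (tendsto_const_nhds.mul
        (tendsto_inv_atTop_zero.comp (tendsto_atTop_add_const_right _ y tendsto_id)))
    rw [show (1 : ℝ) + (x - y) * 0 = 1 by ring] at h2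
    apply h2.congr'
    filter_upwards [eventually_gt_atTop (0:ℝ)] with t ht
    have hty : t + y ≠ 0 := by positivity
    have htx : t + y ≠ 0 := by positivity
    field_simp
    ring
  have h3 : Tendsto (fun t : ℝ => Real.log ((t + x) / (t + y))) atTop (nhds 0) := by
    have := (Real.continuousAt_log one_ne_zero).tendsto.comp h1
    simpa [Function.comp_def] using this
  apply h3.congr'
  filter_upwards [eventually_gt_atTop (0:ℝ)] with t ht
  rw [Real.log_div (by positivity) (by positivity)]

/-- For `y ≤ x`, `∫₀^∞ (1/(t+y) - 1/(t+x)) dt = log x - log y`. -/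
lemma integral_diff_inv (x y : ℝ) (hy : 0 < y) (hxy : y ≤ x) :
    IntegrableOn (fun t : ℝ => (t + y)⁻¹ - (t + x)⁻¹) (Ioi 0) ∧
      ∫ t in Ioi (0:ℝ), ((t + y)⁻¹ - (t + x)⁻¹) = Real.log x - Real.log y := by
  have hx : 0 < x := lt_of_lt_of_le hy hxy
  have hderiv : ∀ t ∈ Ici (0:ℝ),
      HasDerivAt (fun s => Real.log (s + y) - Real.log (s + x)) ((t + y)⁻¹ - (t + x)⁻¹) t :=
    fun t ht => (hd_log y hy ht).sub (hd_log x hx ht)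
  have hpos : ∀ t ∈ Ioi (0:ℝ), 0 ≤ (t + y)⁻¹ - (t + x)⁻¹ := by
    intro t ht
    have ht' : (0:ℝ) < t := ht
    have h1 : (t + x)⁻¹ ≤ (t + y)⁻¹ := by
      apply inv_anti₀ (by positivity) (by linarith)
    linarith
  have htend : Tendsto (fun s : ℝ => Real.log (s + y) - Real.log (s + x)) atTop (nhds 0) :=
    tendsto_ratio y x hy hx
  refine ⟨integrableOn_Ioi_deriv_of_nonneg' hderiv hpos htend, ?_⟩
  rw [integral_Ioi_of_hasDerivAt_of_nonneg' hderiv hpos htend]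
  simp


/-- integrability of `((t+x)(t+y))⁻¹` on `(0,∞)`. -/
lemma integrableOn_prod_inv (x y : ℝ) (hx : 0 < x) (hy : 0 < y) :
    IntegrableOn (fun t : ℝ => ((t + x) * (t + y))⁻¹) (Ioi 0) := by
  set m := min x y with hm
  have hmpos : 0 < m := lt_min hx hy
  have hmeas : AEStronglyMeasurable (fun t : ℝ => ((t + x) * (t + y))⁻¹)
      (volume.restrict (Ioi 0)) := by
    apply ContinuousOn.aestronglyMeasurable _ measurableSet_Ioi
    intro t ht
    have ht' : (0:ℝ) < t := ht
    exact (ContinuousWithinAt.mul ((continuous_id.add continuous_const).continuousWithinAt)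
      ((continuous_id.add continuous_const).continuousWithinAt)).inv₀ (by show (t + x) * (t + y) ≠ 0; positivity)
  refine Integrable.mono (integral_inv_sq_Ioi m hmpos).1 hmeas ?_
  rw [ae_restrict_iff' measurableSet_Ioi]
  apply ae_of_all
  intro t ht
  have ht' : (0:ℝ) < t := ht
  have h1 : (t + m) ^ 2 ≤ (t + x) * (t + y) := by
    have : m ≤ x := min_le_left _ _
    have : m ≤ y := min_le_right _ _
    nlinarith [min_le_left x y, min_le_right x y]
  simp only [norm_inv, Real.norm_eq_abs]
  rw [abs_of_pos (show (0:ℝ) < (t+m)^2 by positivity),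
    abs_of_pos (show (0:ℝ) < (t+x)*(t+y) by positivity)]
  exact inv_anti₀ (by positivity) h1

/-- value of `∫₀^∞ ((t+x)(t+y))⁻¹ dt` for `x ≠ y`. -/
lemma integral_prod_inv_ne (x y : ℝ) (hx : 0 < x) (hy : 0 < y) (hne : x ≠ y) :
    ∫ t in Ioi (0:ℝ), ((t + x) * (t + y))⁻¹ = (Real.log x - Real.log y) / (x - y) := by
  wlog hxy : y < x generalizing x y
  · push_neg at hxy
    have h := this y x hy hx (Ne.symm hne) (lt_of_le_of_ne hxy hne)
    calc ∫ t in Ioi (0:ℝ), ((t + x) * (t + y))⁻¹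
        = ∫ t in Ioi (0:ℝ), ((t + y) * (t + x))⁻¹ := by
          congr 1; ext t; rw [mul_comm]
      _ = (Real.log y - Real.log x) / (y - x) := h
      _ = (Real.log x - Real.log y) / (x - y) := by
          rw [div_eq_div_iff (by intro h0; apply hne; linarith [sub_eq_zero.mp h0])
            (by intro h0; apply hne; linarith [sub_eq_zero.mp h0])]
          ring
  have key := integral_diff_inv x y hy hxy.le
  have heq : ∀ t ∈ Ioi (0:ℝ), ((t + x) * (t + y))⁻¹
      = (x - y)⁻¹ * ((t + y)⁻¹ - (t + x)⁻¹) := by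
    intro t ht
    have ht' : (0:ℝ) < t := ht
    have h1 : t + x ≠ 0 := by positivity
    have h2 : t + y ≠ 0 := by positivity
    have h3 : x - y ≠ 0 := sub_ne_zero.mpr hne
    field_simp
    ring
  rw [setIntegral_congr_fun measurableSet_Ioi heq, MeasureTheory.integral_const_mul, key.2]
  rw [div_eq_inv_mul]


lemma sum_conj_mul_self (w : Fin d → ℂ) :
    ∑ j, (starRingEnd ℂ) (w j) * w j = ((∑ j, ‖w j‖ ^ 2 : ℝ) : ℂ) := by
  push_cast
  exact Finset.sum_congr rfl fun j _ => RCLike.conj_mul (w j)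

lemma colnorm (X : Matrix (Fin d) (Fin d) ℂ) (hX : star X * X = 1) (m : Fin d) :
    ∑ j, ‖X j m‖ ^ 2 = 1 := by
  have h := congrFun (congrFun hX m) m
  rw [Matrix.mul_apply] at h
  simp only [Matrix.one_apply_eq] at h
  have h2 : ∑ j, (starRingEnd ℂ) (X j m) * X j m = 1 := by
    rw [← h]
    exact Finset.sum_congr rfl fun j _ => by
      rw [Matrix.star_apply]; rfl
  rw [sum_conj_mul_self] at h2
  exact_mod_cast h2

lemma mulVec_normsq (X : Matrix (Fin d) (Fin d) ℂ) (hX : star X * X = 1) (u : Fin d → ℂ) :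
    ∑ j, ‖(X *ᵥ u) j‖ ^ 2 = ∑ k, ‖u k‖ ^ 2 := by
  have h : ∑ j, (starRingEnd ℂ) ((X *ᵥ u) j) * (X *ᵥ u) j
      = ∑ k, (starRingEnd ℂ) (u k) * u k := by
    have h1 : star (X *ᵥ u) ⬝ᵥ (X *ᵥ u) = star u ⬝ᵥ u := by
      rw [Matrix.star_mulVec, ← dotProduct_mulVec, Matrix.mulVec_mulVec,
        ← Matrix.star_eq_conjTranspose, hX, Matrix.one_mulVec]
    simpa [dotProduct, Pi.star_apply, Matrix.star_apply] using h1
  rw [sum_conj_mul_self, sum_conj_mul_self] at h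
  exact_mod_cast h

lemma key_CS (X : Matrix (Fin d) (Fin d) ℂ) (hX : star X * X = 1)
    (v u : Fin d → ℂ) :
    ‖∑ j, v j * (starRingEnd ℂ) ((X *ᵥ u) j)‖
      ≤ Real.sqrt (∑ j, ‖v j‖ ^ 2) * Real.sqrt (∑ k, ‖u k‖ ^ 2) := by
  calc ‖∑ j, v j * (starRingEnd ℂ) ((X *ᵥ u) j)‖
      ≤ ∑ j, ‖v j * (starRingEnd ℂ) ((X *ᵥ u) j)‖ := norm_sum_le _ _
    _ = ∑ j, Real.sqrt (‖v j‖ ^ 2) * Real.sqrt (‖(X *ᵥ u) j‖ ^ 2) := by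
        refine Finset.sum_congr rfl fun j _ => ?_
        rw [norm_mul, RingHomIsometric.norm_map, Real.sqrt_sq (norm_nonneg _),
          Real.sqrt_sq (norm_nonneg _)]
    _ ≤ Real.sqrt (∑ j, ‖v j‖ ^ 2) * Real.sqrt (∑ j, ‖(X *ᵥ u) j‖ ^ 2) :=
        Real.sum_sqrt_mul_sqrt_le _ (fun j => by positivity) (fun j => by positivity)
    _ = Real.sqrt (∑ j, ‖v j‖ ^ 2) * Real.sqrt (∑ k, ‖u k‖ ^ 2) := by
        rw [mulVec_normsq X hX u]



lemma star_prod_unit {A B : Matrix (Fin d) (Fin d) ℂ}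
    (hA2 : A * star A = 1) (hB1 : star B * B = 1) :
    star (star A * B) * (star A * B) = 1 := by
  rw [StarMul.star_mul, star_star, ← Matrix.mul_assoc, Matrix.mul_assoc (star B) A (star A),
    hA2, Matrix.mul_one, hB1]

lemma sqrt_term_bound (c : Fin d → ℝ) (M : ℝ) (hc0 : ∀ j, 0 ≤ c j) (hcM : ∀ j, c j ≤ M)
    (hM : 0 ≤ M) (G : Matrix (Fin d) (Fin d) ℂ) (hG : star G * G = 1) (m : Fin d) :
    Real.sqrt (∑ j, ‖(c j : ℂ) * G j m‖ ^ 2) ≤ M := by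
  have h1 : ∑ j, ‖(c j : ℂ) * G j m‖ ^ 2 ≤ M ^ 2 := by
    calc ∑ j, ‖(c j : ℂ) * G j m‖ ^ 2 = ∑ j, (c j) ^ 2 * ‖G j m‖ ^ 2 := by
          refine Finset.sum_congr rfl fun j _ => ?_
          rw [norm_mul, Complex.norm_real, Real.norm_eq_abs, mul_pow, sq_abs]
      _ ≤ ∑ j, M ^ 2 * ‖G j m‖ ^ 2 := by
          refine Finset.sum_le_sum fun j _ => ?_
          apply mul_le_mul_of_nonneg_right _ (by positivity)
          exact pow_le_pow_left₀ (hc0 j) (hcM j) 2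
      _ = M ^ 2 := by rw [← Finset.mul_sum, colnorm G hG m, mul_one]
  calc Real.sqrt (∑ j, ‖(c j : ℂ) * G j m‖ ^ 2) ≤ Real.sqrt (M ^ 2) :=
        Real.sqrt_le_sqrt h1
    _ = M := Real.sqrt_sq hM

/-- The master inequality. -/
lemma master (U V W : Matrix (Fin d) (Fin d) ℂ)
    (hU1 : star U * U = 1) (hU2 : U * star U = 1)
    (hV1 : star V * V = 1) (hV2 : V * star V = 1)
    (hW1 : star W * W = 1)
    (lam mu nu : Fin d → ℝ)
    (hid : U * diagonal (fun j => (lam j : ℂ)) * star U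
        - V * diagonal (fun k => (mu k : ℂ)) * star V
        = W * diagonal (fun m => (nu m : ℂ)) * star W)
    (a b : Fin d → ℝ) (Am Bm : ℝ)
    (ha0 : ∀ j, 0 ≤ a j) (hb0 : ∀ k, 0 ≤ b k)
    (hA : ∀ j, a j ≤ Am) (hB : ∀ k, b k ≤ Bm) (hAm : 0 ≤ Am) (hBm : 0 ≤ Bm) :
    ∑ j, ∑ k, a j * b k * (lam j - mu k) * ‖(star U * V) j k‖ ^ 2
      ≤ Am * Bm * ∑ m, |nu m| := by
  have hX : star (star U * V) * (star U * V) = 1 := star_prod_unit hU2 hV1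
  have hG : star (star U * W) * (star U * W) = 1 := star_prod_unit hU2 hW1
  have hH : star (star V * W) * (star V * W) = 1 := star_prod_unit hV2 hW1
  -- entrywise spectral identity
  have hid2 : diagonal (fun j => (lam j : ℂ)) * (star U * V)
      - (star U * V) * diagonal (fun k => (mu k : ℂ))
      = (star U * W) * diagonal (fun m => (nu m : ℂ)) * (star W * V) := by
    have h := congrArg (fun M => star U * M * V) hid
    simp only [Matrix.mul_sub, Matrix.sub_mul] at h
    calc diagonal (fun j => (lam j : ℂ)) * (star U * V)
          - (star U * V) * diagonal (fun k => (mu k : ℂ))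
        = star U * (U * diagonal (fun j => (lam j : ℂ)) * star U) * V
          - star U * (V * diagonal (fun k => (mu k : ℂ)) * star V) * V := by
          congr 1
          · simp only [← Matrix.mul_assoc]
            rw [hU1, Matrix.one_mul, Matrix.mul_assoc]
          · simp only [← Matrix.mul_assoc]
            rw [Matrix.mul_assoc (star U * V * diagonal fun k => (mu k : ℂ)) (star V) V,
              hV1, Matrix.mul_one]
      _ = star U * (W * diagonal (fun m => (nu m : ℂ)) * star W) * V := h
      _ = (star U * W) * diagonal (fun m => (nu m : ℂ)) * (star W * V) := by
          simp only [← Matrix.mul_assoc]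
  have E : ∀ j k, ((lam j : ℂ) - mu k) * (star U * V) j k
      = ∑ m, (nu m : ℂ) *
          ((star U * W) j m * (starRingEnd ℂ) ((star V * W) k m)) := by
    intro j k
    have h := congrFun (congrFun hid2 j) k
    rw [Matrix.sub_apply, Matrix.diagonal_mul, Matrix.mul_diagonal, Matrix.mul_apply] at h
    have hsw : ∀ m, (star W * V) m k = (starRingEnd ℂ) ((star V * W) k m) := by
      intro m
      rw [Matrix.mul_apply, Matrix.mul_apply, map_sum]
      refine Finset.sum_congr rfl fun i _ => ?_
      simp only [Matrix.star_apply, starRingEnd_apply]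
      rw [StarMul.star_mul, star_star]
    calc ((lam j : ℂ) - mu k) * (star U * V) j k
        = (lam j : ℂ) * (star U * V) j k - (star U * V) j k * (mu k : ℂ) := by ring
      _ = ∑ m, ((star U * W) * diagonal (fun m => (nu m : ℂ))) j m * (star W * V) m k := h
      _ = ∑ m, (nu m : ℂ) * ((star U * W) j m * (starRingEnd ℂ) ((star V * W) k m)) := by
          refine Finset.sum_congr rfl fun m _ => ?_
          rw [Matrix.mul_diagonal, hsw m]; ring
  have step1 : ((∑ j, ∑ k, a j * b k * (lam j - mu k) * ‖(star U * V) j k‖ ^ 2 : ℝ) : ℂ)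
      = ∑ m, (nu m : ℂ) * ∑ j, ∑ k, ((a j * b k : ℝ) : ℂ) *
          ((star U * W) j m * (starRingEnd ℂ) ((star V * W) k m)) *
          (starRingEnd ℂ) ((star U * V) j k) := by
    push_cast
    calc (∑ j, ∑ k, (a j : ℂ) * b k * ((lam j : ℂ) - mu k) * (‖(star U * V) j k‖ : ℂ) ^ 2)
        = ∑ j, ∑ k, (a j : ℂ) * b k * (((lam j : ℂ) - mu k) * (star U * V) j k)
            * (starRingEnd ℂ) ((star U * V) j k) := by
          refine Finset.sum_congr rfl fun j _ => Finset.sum_congr rfl fun k _ => ?_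
          have hc : (star U * V) j k * (starRingEnd ℂ) ((star U * V) j k)
              = ((‖(star U * V) j k‖ : ℂ)) ^ 2 := by
            rw [RCLike.mul_conj]; norm_cast
          linear_combination (-((a j : ℂ) * b k * ((lam j : ℂ) - mu k))) * hc
      _ = ∑ j, ∑ k, ∑ m, (nu m : ℂ) * ((a j : ℂ) * b k *
            ((star U * W) j m * (starRingEnd ℂ) ((star V * W) k m)) *
            (starRingEnd ℂ) ((star U * V) j k)) := by
          refine Finset.sum_congr rfl fun j _ => Finset.sum_congr rfl fun k _ => ?_
          rw [E j k, Finset.mul_sum, Finset.sum_mul]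
          refine Finset.sum_congr rfl fun m _ => ?_
          ring
      _ = ∑ m, ∑ j, ∑ k, (nu m : ℂ) * ((a j : ℂ) * b k *
            ((star U * W) j m * (starRingEnd ℂ) ((star V * W) k m)) *
            (starRingEnd ℂ) ((star U * V) j k)) := by
          rw [show (∑ j, ∑ k, ∑ m, (nu m : ℂ) * ((a j : ℂ) * b k *
              ((star U * W) j m * (starRingEnd ℂ) ((star V * W) k m)) *
              (starRingEnd ℂ) ((star U * V) j k)))
            = ∑ j, ∑ m, ∑ k, (nu m : ℂ) * ((a j : ℂ) * b k *
              ((star U * W) j m * (starRingEnd ℂ) ((star V * W) k m)) *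
              (starRingEnd ℂ) ((star U * V) j k))
            from Finset.sum_congr rfl fun j _ => Finset.sum_comm]
          exact Finset.sum_comm
      _ = ∑ m, (nu m : ℂ) * ∑ j, ∑ k, ((a j : ℂ) * b k) *
            ((star U * W) j m * (starRingEnd ℂ) ((star V * W) k m)) *
            (starRingEnd ℂ) ((star U * V) j k) := by
          simp only [Finset.mul_sum]
  -- bound each T m
  have hTm : ∀ m, ‖∑ j, ∑ k, ((a j * b k : ℝ) : ℂ) *
      ((star U * W) j m * (starRingEnd ℂ) ((star V * W) k m)) *
      (starRingEnd ℂ) ((star U * V) j k)‖ ≤ Am * Bm := by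
    intro m
    set v : Fin d → ℂ := fun j => (a j : ℂ) * (star U * W) j m with hv
    set u : Fin d → ℂ := fun k => (b k : ℂ) * (star V * W) k m with hu
    have heq : ∑ j, ∑ k, ((a j * b k : ℝ) : ℂ) *
        ((star U * W) j m * (starRingEnd ℂ) ((star V * W) k m)) *
        (starRingEnd ℂ) ((star U * V) j k)
        = ∑ j, v j * (starRingEnd ℂ) (((star U * V) *ᵥ u) j) := by
      refine Finset.sum_congr rfl fun j _ => ?_
      have hmv : (starRingEnd ℂ) (((star U * V) *ᵥ u) j)
          = ∑ k, (b k : ℂ) * (starRingEnd ℂ) ((star V * W) k m) *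
              (starRingEnd ℂ) ((star U * V) j k) := by
        rw [Matrix.mulVec, dotProduct, map_sum]
        refine Finset.sum_congr rfl fun k _ => ?_
        simp only [hu, _root_.map_mul, Complex.conj_ofReal]
        ring
      rw [hmv, Finset.mul_sum]
      refine Finset.sum_congr rfl fun k _ => ?_
      rw [hv]
      push_cast
      ring
    rw [heq]
    calc ‖∑ j, v j * (starRingEnd ℂ) (((star U * V) *ᵥ u) j)‖
        ≤ Real.sqrt (∑ j, ‖v j‖ ^ 2) * Real.sqrt (∑ k, ‖u k‖ ^ 2) := key_CS _ hX v u
      _ ≤ Am * Bm := by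
          apply mul_le_mul (sqrt_term_bound a Am ha0 hA hAm _ hG m)
            (sqrt_term_bound b Bm hb0 hB hBm _ hH m) (Real.sqrt_nonneg _) hAm
  -- conclude
  have hre : (∑ j, ∑ k, a j * b k * (lam j - mu k) * ‖(star U * V) j k‖ ^ 2 : ℝ)
      = (∑ m, (nu m : ℂ) * ∑ j, ∑ k, ((a j * b k : ℝ) : ℂ) *
          ((star U * W) j m * (starRingEnd ℂ) ((star V * W) k m)) *
          (starRingEnd ℂ) ((star U * V) j k)).re := by
    rw [← step1, Complex.ofReal_re]
  rw [hre]
  calc (∑ m, (nu m : ℂ) * ∑ j, ∑ k, ((a j * b k : ℝ) : ℂ) *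
          ((star U * W) j m * (starRingEnd ℂ) ((star V * W) k m)) *
          (starRingEnd ℂ) ((star U * V) j k)).re
      ≤ ‖∑ m, (nu m : ℂ) * ∑ j, ∑ k, ((a j * b k : ℝ) : ℂ) *
          ((star U * W) j m * (starRingEnd ℂ) ((star V * W) k m)) *
          (starRingEnd ℂ) ((star U * V) j k)‖ := Complex.re_le_norm _
    _ ≤ ∑ m, ‖(nu m : ℂ) * ∑ j, ∑ k, ((a j * b k : ℝ) : ℂ) *
          ((star U * W) j m * (starRingEnd ℂ) ((star V * W) k m)) *
          (starRingEnd ℂ) ((star U * V) j k)‖ := norm_sum_le _ _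
    _ ≤ ∑ m, |nu m| * (Am * Bm) := by
        refine Finset.sum_le_sum fun m _ => ?_
        rw [norm_mul, Complex.norm_real, Real.norm_eq_abs]
        exact mul_le_mul_of_nonneg_left (hTm m) (abs_nonneg _)
    _ = Am * Bm * ∑ m, |nu m| := by rw [← Finset.sum_mul]; ring





lemma rownorm (X : Matrix (Fin d) (Fin d) ℂ) (hX : X * star X = 1) (j : Fin d) :
    ∑ k, ‖X j k‖ ^ 2 = 1 := by
  have h := congrFun (congrFun hX j) j
  rw [Matrix.mul_apply] at h
  simp only [Matrix.one_apply_eq] at h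
  have h2 : ((∑ k, ‖X j k‖ ^ 2 : ℝ) : ℂ) = 1 := by
    rw [← h]
    push_cast
    refine Finset.sum_congr rfl fun k _ => ?_
    rw [Matrix.star_apply, ← starRingEnd_apply, RCLike.mul_conj]
    norm_cast
  exact_mod_cast h2

lemma trace_conj {U : Matrix (Fin d) (Fin d) ℂ} (M : Matrix (Fin d) (Fin d) ℂ)
    (hU1 : star U * U = 1) :
    (U * M * star U).trace = M.trace := by
  rw [Matrix.trace_mul_cycle, hU1, Matrix.one_mul]

lemma sandwich_mul (U A B : Matrix (Fin d) (Fin d) ℂ) (hU1 : star U * U = 1) :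
    (U * A * star U) * (U * B * star U) = U * (A * B) * star U := by
  have h : star U * (U * B * star U) = B * star U := by
    rw [← Matrix.mul_assoc, ← Matrix.mul_assoc, hU1, Matrix.one_mul]
  calc (U * A * star U) * (U * B * star U)
      = (U * A) * (star U * (U * B * star U)) := by simp only [Matrix.mul_assoc]
    _ = (U * A) * (B * star U) := by rw [h]
    _ = U * (A * B) * star U := by simp only [Matrix.mul_assoc]

lemma sandwich_mul₂ (U V A B : Matrix (Fin d) (Fin d) ℂ) (hU2 : U * star U = 1) :
    (U * A * star U) * (V * B * star V)
      = U * (A * (star U * V) * B * (star V * U)) * star U := by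
  have : U * (A * (star U * V) * B * (star V * U)) * star U
      = U * (A * (star U * (V * (B * (star V * (U * star U)))))) := by
    simp only [Matrix.mul_assoc]
  rw [this, hU2, Matrix.mul_one]
  simp only [Matrix.mul_assoc]

lemma trace_diag_sandwich (X : Matrix (Fin d) (Fin d) ℂ) (c e : Fin d → ℝ) :
    (Matrix.diagonal (fun i => (c i : ℂ)) * X * Matrix.diagonal (fun i => (e i : ℂ))
      * star X).trace
      = ((∑ j, ∑ k, c j * e k * ‖X j k‖ ^ 2 : ℝ) : ℂ) := by
  simp only [Matrix.trace, Matrix.diag_apply, Matrix.mul_apply, Matrix.mul_diagonal,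
    Matrix.diagonal_apply, Matrix.star_apply, ite_mul, zero_mul, mul_ite, mul_zero,
    Finset.sum_ite_eq, Finset.sum_ite_eq', Finset.mem_univ, if_true]
  push_cast
  refine Finset.sum_congr rfl fun j _ => Finset.sum_congr rfl fun k _ => ?_
  have hc : X j k * (starRingEnd ℂ) (X j k) = ((‖X j k‖ : ℂ)) ^ 2 := by
    rw [RCLike.mul_conj]; norm_cast
  rw [starRingEnd_apply] at hc
  linear_combination ((c j : ℂ) * (e k : ℂ)) * hc






lemma spectral' {A : Matrix (Fin d) (Fin d) ℂ} (hA : A.IsHermitian) :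
    A = (hA.eigenvectorUnitary : Matrix (Fin d) (Fin d) ℂ) *
      Matrix.diagonal (fun i => (hA.eigenvalues i : ℂ)) *
      (star hA.eigenvectorUnitary : Matrix (Fin d) (Fin d) ℂ) :=
  hA.spectral_theorem

lemma prod_star_unit {A B : Matrix (Fin d) (Fin d) ℂ}
    (hA1 : star A * A = 1) (hB2 : B * star B = 1) :
    (star A * B) * star (star A * B) = 1 := by
  rw [StarMul.star_mul, star_star, ← Matrix.mul_assoc, Matrix.mul_assoc (star A) B (star B),
    hB2, Matrix.mul_one, hA1]

lemma traceNorm_eq_sum_abs (Δ : Matrix (Fin d) (Fin d) ℂ) (hΔ : Δ.IsHermitian) :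
    traceNorm Δ = ∑ m, |hΔ.eigenvalues m| := by
  have hW1 : star (hΔ.eigenvectorUnitary : Matrix (Fin d) (Fin d) ℂ)
      * (hΔ.eigenvectorUnitary : Matrix (Fin d) (Fin d) ℂ) = 1 :=
    Matrix.mem_unitaryGroup_iff'.mp hΔ.eigenvectorUnitary.2
  set W := (hΔ.eigenvectorUnitary : Matrix (Fin d) (Fin d) ℂ) with hWdef
  set s : Fin d → ℝ := fun m => Real.sqrt |hΔ.eigenvalues m| with hsdef
  set S := W * Matrix.diagonal (fun m => ((|hΔ.eigenvalues m| : ℝ) : ℂ)) * star W with hSdef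
  have hdd : Matrix.diagonal (fun m => ((s m : ℝ) : ℂ)) *
      Matrix.diagonal (fun m => ((s m : ℝ) : ℂ))
      = Matrix.diagonal (fun m => ((|hΔ.eigenvalues m| : ℝ) : ℂ)) := by
    have hfun : (fun m => ((s m : ℝ) : ℂ) * ((s m : ℝ) : ℂ))
        = fun m => ((|hΔ.eigenvalues m| : ℝ) : ℂ) := by
      funext m; rw [← Complex.ofReal_mul, hsdef, Real.mul_self_sqrt (abs_nonneg _)]
    rw [Matrix.diagonal_mul_diagonal, hfun]
  have hSpsd : S.PosSemidef := by
    have hfac : S = (Matrix.diagonal (fun m => ((s m : ℝ) : ℂ)) * star W)ᴴ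
        * (Matrix.diagonal (fun m => ((s m : ℝ) : ℂ)) * star W) := by
      rw [Matrix.conjTranspose_mul, Matrix.diagonal_conjTranspose,
        show (star W)ᴴ = W from by rw [← Matrix.star_eq_conjTranspose, star_star]]
      have hst : star (fun m => ((s m : ℝ) : ℂ)) = fun m => ((s m : ℝ) : ℂ) := by
        funext m; simp [Complex.conj_ofReal]
      rw [hst, hSdef, ← hdd]
      simp only [Matrix.mul_assoc]
    rw [hfac]
    exact Matrix.posSemidef_conjTranspose_mul_self _
  have hsq : S ^ 2 = Δᴴ * Δ := by
    have hfun2 : (fun m => ((|hΔ.eigenvalues m| : ℝ) : ℂ) * ((|hΔ.eigenvalues m| : ℝ) : ℂ))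
        = fun m => ((hΔ.eigenvalues m : ℝ) : ℂ) * ((hΔ.eigenvalues m : ℝ) : ℂ) := by
      funext m
      rw [← Complex.ofReal_mul, ← Complex.ofReal_mul, abs_mul_abs_self]
    calc S ^ 2 = W * (Matrix.diagonal (fun m => ((|hΔ.eigenvalues m| : ℝ) : ℂ)) *
          Matrix.diagonal (fun m => ((|hΔ.eigenvalues m| : ℝ) : ℂ))) * star W := by
          rw [pow_two, hSdef]; exact sandwich_mul _ _ _ hW1
      _ = W * (Matrix.diagonal (fun m => ((hΔ.eigenvalues m : ℝ) : ℂ)) *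
          Matrix.diagonal (fun m => ((hΔ.eigenvalues m : ℝ) : ℂ))) * star W := by
          rw [Matrix.diagonal_mul_diagonal, Matrix.diagonal_mul_diagonal, hfun2]
      _ = (W * Matrix.diagonal (fun m => ((hΔ.eigenvalues m : ℝ) : ℂ)) * star W) *
          (W * Matrix.diagonal (fun m => ((hΔ.eigenvalues m : ℝ) : ℂ)) * star W) :=
          (sandwich_mul _ _ _ hW1).symm
      _ = Δ * Δ := by rw [← spectral' hΔ]
      _ = Δᴴ * Δ := by rw [show Δᴴ = Δ from hΔ]
  have hkey : S = (Matrix.posSemidef_conjTranspose_mul_self Δ).1.eigenvectorUnitary.1 *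
      diagonal (((↑) : ℝ → ℂ) ∘ (√·) ∘ (Matrix.posSemidef_conjTranspose_mul_self Δ).1.eigenvalues) *
      (star (Matrix.posSemidef_conjTranspose_mul_self Δ).1.eigenvectorUnitary :
        Matrix (Fin d) (Fin d) ℂ) := by
    open scoped MatrixOrder in
    have hS0 : 0 ≤ S := hSpsd.nonneg
    open scoped MatrixOrder in
    have hM0 : 0 ≤ Δᴴ * Δ := (Matrix.posSemidef_conjTranspose_mul_self Δ).nonneg
    open scoped MatrixOrder in
    rw [← CFC.sqrt_unique (a := Δᴴ * Δ) (by rw [← pow_two]; exact hsq) hS0, CFC.sqrt_eq_cfc,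
      cfc_nnreal_eq_real _ _ hM0, (Matrix.posSemidef_conjTranspose_mul_self Δ).1.cfc_eq,
      Matrix.IsHermitian.cfc, Unitary.conjStarAlgAut_apply]
    unfold Real.sqrt
    rfl
  rw [traceNorm, ← hkey, hSdef, trace_conj _ hW1, Matrix.trace_diagonal]
  rw [show (∑ m, ((|hΔ.eigenvalues m| : ℝ) : ℂ)) = ((∑ m, |hΔ.eigenvalues m| : ℝ) : ℂ) by
    push_cast; rfl, Complex.ofReal_re]

lemma relEntropy_eq {ρ σ : Matrix (Fin d) (Fin d) ℂ}
    (hρ : ρ.IsHermitian) (hσ : σ.IsHermitian) :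
    relEntropy hρ hσ = ∑ j, ∑ k, hρ.eigenvalues j *
      (Real.log (hρ.eigenvalues j) - Real.log (hσ.eigenvalues k)) *
      ‖((star (hρ.eigenvectorUnitary : Matrix (Fin d) (Fin d) ℂ))
        * (hσ.eigenvectorUnitary : Matrix (Fin d) (Fin d) ℂ)) j k‖ ^ 2 := by
  set U := (hρ.eigenvectorUnitary : Matrix (Fin d) (Fin d) ℂ) with hUdef
  set V := (hσ.eigenvectorUnitary : Matrix (Fin d) (Fin d) ℂ) with hVdef
  have hU1 : star U * U = 1 := Matrix.mem_unitaryGroup_iff'.mp hρ.eigenvectorUnitary.2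
  have hU2 : U * star U = 1 := Matrix.mem_unitaryGroup_iff.mp hρ.eigenvectorUnitary.2
  have hV2 : V * star V = 1 := Matrix.mem_unitaryGroup_iff.mp hσ.eigenvectorUnitary.2
  have hXr : (star U * V) * star (star U * V) = 1 := prod_star_unit hU1 hV2
  have hst : star V * U = star (star U * V) := by rw [StarMul.star_mul, star_star]
  have h1 : (ρ * matFun hρ Real.log).trace
      = ((∑ j, hρ.eigenvalues j * Real.log (hρ.eigenvalues j) : ℝ) : ℂ) := by
    have hmm : ρ * matFun hρ Real.log
        = U * (Matrix.diagonal (fun i => ((hρ.eigenvalues i : ℝ) : ℂ)) *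
            Matrix.diagonal (fun i => ((Real.log (hρ.eigenvalues i) : ℝ) : ℂ))) * star U := by
      rw [← sandwich_mul U _ _ hU1, ← spectral' hρ]
      rfl
    rw [hmm, trace_conj _ hU1, Matrix.diagonal_mul_diagonal, Matrix.trace_diagonal]
    push_cast; rfl
  have h2 : (ρ * matFun hσ Real.log).trace
      = ((∑ j, ∑ k, hρ.eigenvalues j * Real.log (hσ.eigenvalues k) *
          ‖(star U * V) j k‖ ^ 2 : ℝ) : ℂ) := by
    have hmm : ρ * matFun hσ Real.log
        = U * (Matrix.diagonal (fun i => ((hρ.eigenvalues i : ℝ) : ℂ)) * (star U * V) *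
            Matrix.diagonal (fun i => ((Real.log (hσ.eigenvalues i) : ℝ) : ℂ)) *
            star (star U * V)) * star U := by
      rw [← hst, ← sandwich_mul₂ U V _ _ hU2, ← spectral' hρ]
      rfl
    rw [hmm, trace_conj _ hU1, trace_diag_sandwich]
  rw [relEntropy, Matrix.mul_sub, Matrix.trace_sub, h1, h2, Complex.sub_re,
    Complex.ofReal_re, Complex.ofReal_re]
  have hrow : ∀ j, ∑ k, ‖(star U * V) j k‖ ^ 2 = 1 := rownorm _ hXr
  calc (∑ j, hρ.eigenvalues j * Real.log (hρ.eigenvalues j))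
        - ∑ j, ∑ k, hρ.eigenvalues j * Real.log (hσ.eigenvalues k) * ‖(star U * V) j k‖ ^ 2
      = (∑ j, ∑ k, hρ.eigenvalues j * Real.log (hρ.eigenvalues j) * ‖(star U * V) j k‖ ^ 2)
        - ∑ j, ∑ k, hρ.eigenvalues j * Real.log (hσ.eigenvalues k) *
          ‖(star U * V) j k‖ ^ 2 := by
        congr 1
        refine Finset.sum_congr rfl fun j _ => ?_
        rw [← Finset.mul_sum, hrow j, mul_one]
    _ = ∑ j, ∑ k, hρ.eigenvalues j *
          (Real.log (hρ.eigenvalues j) - Real.log (hσ.eigenvalues k)) *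
          ‖(star U * V) j k‖ ^ 2 := by
        rw [← Finset.sum_sub_distrib]
        refine Finset.sum_congr rfl fun j _ => ?_
        rw [← Finset.sum_sub_distrib]
        refine Finset.sum_congr rfl fun k _ => ?_
        ring

end Aux

/-- upper continuity bound on the Umegaki relative entropy in terms of the
smallest eigenvalues. -/
theorem relEntropy_le_div_min (d : ℕ)
    (ρ σ : Matrix (Fin d) (Fin d) ℂ) (hρ : ρ.PosDef) (hσ : σ.PosDef)
    (hρtr : ρ.trace = 1) (hσtr : σ.trace = 1)
    (lρ aρ aσ : ℝ)
    (hl : IsGreatest (Set.range hρ.1.eigenvalues) lρ)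
    (haρ : IsLeast (Set.range hρ.1.eigenvalues) aρ)
    (haσ : IsLeast (Set.range hσ.1.eigenvalues) aσ) :
    relEntropy hρ.1 hσ.1 ≤ traceNorm (ρ - σ) * lρ / min aρ aσ := by
  classical
  have hΔ : (ρ - σ).IsHermitian := hρ.1.sub hσ.1
  set lam := hρ.1.eigenvalues with hlamdef
  set mu := hσ.1.eigenvalues with hmudef
  set nu := hΔ.eigenvalues with hnudef
  set U := (hρ.1.eigenvectorUnitary : Matrix (Fin d) (Fin d) ℂ) with hUdef
  set V := (hσ.1.eigenvectorUnitary : Matrix (Fin d) (Fin d) ℂ) with hVdef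
  set W := (hΔ.eigenvectorUnitary : Matrix (Fin d) (Fin d) ℂ) with hWdef
  have hU1 : star U * U = 1 := Matrix.mem_unitaryGroup_iff'.mp hρ.1.eigenvectorUnitary.2
  have hU2 : U * star U = 1 := Matrix.mem_unitaryGroup_iff.mp hρ.1.eigenvectorUnitary.2
  have hV1 : star V * V = 1 := Matrix.mem_unitaryGroup_iff'.mp hσ.1.eigenvectorUnitary.2
  have hV2 : V * star V = 1 := Matrix.mem_unitaryGroup_iff.mp hσ.1.eigenvectorUnitary.2
  have hW1 : star W * W = 1 := Matrix.mem_unitaryGroup_iff'.mp hΔ.eigenvectorUnitary.2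
  set X := star U * V with hXdef
  set α := min aρ aσ with hαdef
  set N := traceNorm (ρ - σ) with hNdef
  have hlam : ∀ j, 0 < lam j := fun j => hρ.eigenvalues_pos j
  have hmu : ∀ k, 0 < mu k := fun k => hσ.eigenvalues_pos k
  have haρpos : 0 < aρ := by obtain ⟨j, hj⟩ := haρ.1; exact hj ▸ hlam j
  have haσpos : 0 < aσ := by obtain ⟨k, hk⟩ := haσ.1; exact hk ▸ hmu k
  have hαpos : 0 < α := lt_min haρpos haσpos
  have hαlam : ∀ j, α ≤ lam j :=
    fun j => le_trans (min_le_left _ _) (haρ.2 (Set.mem_range_self j))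
  have hαmu : ∀ k, α ≤ mu k :=
    fun k => le_trans (min_le_right _ _) (haσ.2 (Set.mem_range_self k))
  have hlamle : ∀ j, lam j ≤ lρ := fun j => hl.2 (Set.mem_range_self j)
  have hlρpos : 0 < lρ := by obtain ⟨j, hj⟩ := hl.1; exact hj ▸ hlam j
  have hαlρ : α ≤ lρ := by obtain ⟨j, hj⟩ := hl.1; exact hj ▸ hαlam j
  have hid : U * Matrix.diagonal (fun j => (lam j : ℂ)) * star U
      - V * Matrix.diagonal (fun k => (mu k : ℂ)) * star V
      = W * Matrix.diagonal (fun m => (nu m : ℂ)) * star W := by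
    rw [← spectral' hρ.1, ← spectral' hσ.1]; exact spectral' hΔ
  have hNeq : N = ∑ m, |nu m| := traceNorm_eq_sum_abs _ hΔ
  -- pointwise-in-t bound
  have hbound : ∀ t ∈ Set.Ioi (0:ℝ),
      ∑ j, ∑ k, lam j * (lam j - mu k) * ‖X j k‖ ^ 2 * ((t + lam j) * (t + mu k))⁻¹
        ≤ N * lρ * ((t + α) ^ 2)⁻¹ := by
    intro t ht
    have ht0 : (0:ℝ) < t := ht
    have key := master U V W hU1 hU2 hV1 hV2 hW1 lam mu nu hid
      (fun j => lam j / (t + lam j)) (fun k => (t + mu k)⁻¹)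
      (lρ / (t + α)) ((t + α)⁻¹)
      (fun j => by have := hlam j; positivity)
      (fun k => by have := hmu k; positivity)
      (fun j => by
        have h1 := hlam j
        rw [div_le_div_iff₀ (by positivity) (by positivity)]
        nlinarith [hlamle j, hαlρ, (hlam j).le, hαlam j, ht0.le, hαpos.le])
      (fun k => inv_anti₀ (by positivity) (by linarith [hαmu k]))
      (by positivity) (by positivity)
    calc ∑ j, ∑ k, lam j * (lam j - mu k) * ‖X j k‖ ^ 2 * ((t + lam j) * (t + mu k))⁻¹
        = ∑ j, ∑ k, (lam j / (t + lam j)) * ((t + mu k)⁻¹) * (lam j - mu k)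
            * ‖X j k‖ ^ 2 := by
          refine Finset.sum_congr rfl fun j _ => Finset.sum_congr rfl fun k _ => ?_
          rw [mul_inv, div_eq_mul_inv]; ring
      _ ≤ (lρ / (t + α)) * ((t + α)⁻¹) * ∑ m, |nu m| := key
      _ = N * lρ * ((t + α) ^ 2)⁻¹ := by
          rw [hNeq, div_eq_mul_inv, pow_two, mul_inv]; ring
  -- per-pair integrability and values
  have hint : ∀ (j k : Fin d), MeasureTheory.IntegrableOn
      (fun t => lam j * (lam j - mu k) * ‖X j k‖ ^ 2 * ((t + lam j) * (t + mu k))⁻¹)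
      (Set.Ioi 0) :=
    fun j k => (integrableOn_prod_inv (lam j) (mu k) (hlam j) (hmu k)).const_mul _
  have hval : ∀ (j k : Fin d), ∫ t in Set.Ioi (0:ℝ),
      lam j * (lam j - mu k) * ‖X j k‖ ^ 2 * ((t + lam j) * (t + mu k))⁻¹
      = lam j * (Real.log (lam j) - Real.log (mu k)) * ‖X j k‖ ^ 2 := by
    intro j k
    rcases eq_or_ne (lam j) (mu k) with heq | hne
    · rw [heq]; simp
    · have hsub : lam j - mu k ≠ 0 := sub_ne_zero.mpr hne
      rw [MeasureTheory.integral_const_mul,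
        integral_prod_inv_ne _ _ (hlam j) (hmu k) hne]
      field_simp
  -- relEntropy as an integral
  have hrel : relEntropy hρ.1 hσ.1 = ∫ t in Set.Ioi (0:ℝ),
      ∑ j, ∑ k, lam j * (lam j - mu k) * ‖X j k‖ ^ 2
        * ((t + lam j) * (t + mu k))⁻¹ := by
    rw [relEntropy_eq hρ.1 hσ.1]
    calc ∑ j, ∑ k, lam j * (Real.log (lam j) - Real.log (mu k)) * ‖X j k‖ ^ 2
        = ∑ j, ∑ k, ∫ t in Set.Ioi (0:ℝ), lam j * (lam j - mu k) * ‖X j k‖ ^ 2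
            * ((t + lam j) * (t + mu k))⁻¹ := by
          exact Finset.sum_congr rfl fun j _ => Finset.sum_congr rfl fun k _ =>
            (hval j k).symm
      _ = ∑ j, ∫ t in Set.Ioi (0:ℝ), ∑ k, lam j * (lam j - mu k) * ‖X j k‖ ^ 2
            * ((t + lam j) * (t + mu k))⁻¹ :=
          Finset.sum_congr rfl fun j _ =>
            (MeasureTheory.integral_finset_sum _ fun k _ => hint j k).symm
      _ = ∫ t in Set.Ioi (0:ℝ), ∑ j, ∑ k, lam j * (lam j - mu k) * ‖X j k‖ ^ 2
            * ((t + lam j) * (t + mu k))⁻¹ :=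
          (MeasureTheory.integral_finset_sum _ fun j _ =>
            MeasureTheory.integrable_finset_sum _ fun k _ => hint j k).symm
  have hfint : MeasureTheory.IntegrableOn
      (fun t => ∑ j, ∑ k, lam j * (lam j - mu k) * ‖X j k‖ ^ 2
        * ((t + lam j) * (t + mu k))⁻¹) (Set.Ioi 0) :=
    MeasureTheory.integrable_finset_sum _ fun j _ =>
      MeasureTheory.integrable_finset_sum _ fun k _ => hint j k
  have hgint : MeasureTheory.IntegrableOn
      (fun t => N * lρ * ((t + α) ^ 2)⁻¹) (Set.Ioi 0) :=
    ((integral_inv_sq_Ioi α hαpos).1).const_mul _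
  rw [hrel]
  calc (∫ t in Set.Ioi (0:ℝ), ∑ j, ∑ k, lam j * (lam j - mu k) * ‖X j k‖ ^ 2
        * ((t + lam j) * (t + mu k))⁻¹)
      ≤ ∫ t in Set.Ioi (0:ℝ), N * lρ * ((t + α) ^ 2)⁻¹ :=
        MeasureTheory.setIntegral_mono_on hfint hgint measurableSet_Ioi hbound
    _ = N * lρ * α⁻¹ := by
        rw [MeasureTheory.integral_const_mul, (integral_inv_sq_Ioi α hαpos).2]
    _ = N * lρ / α := by rw [div_eq_mul_inv]
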